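/- arXiv:1106.6254 — 2 statements merged into one kernel-verified Lean document; each statement's English description precedes it below -/
import Mathlib

section
/- Let C be a (V1;k)-bineighborly polytopal d-complex with k ≥ 2. Then C is (k−1)-neighborly, i.e., every subset of at most k−1 vertices of C is the vertex set of a face of C. -/
open Set Pointwise

noncomputable section

/-- Euclidean `d`-space `E^d`, modeled as `Fin d → ℝ`. -/
abbrev Euc (d : ℕ) : Type := Fin d → ℝ

/-- The (affine) dimension of a subset of Euclidean space: the dimension of its affine hull. -/
def setDim {d : ℕ} (F : Set (Euc d)) : ℕ :=
  Module.finrank ℝ (affineSpan ℝ F).direction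

/-- A (convex) polytope: the convex hull of a finite point set. -/
def IsPolytope {d : ℕ} (P : Set (Euc d)) : Prop :=
  ∃ S : Set (Euc d), S.Finite ∧ P = convexHull ℝ S

/-- `F` is a proper (nonempty) face of `P`: `F` is an exposed face of `P` (the intersection
of `P` with a supporting hyperplane) which is nonempty and different from `P` itself. -/
def IsProperFaceOf {d : ℕ} (P F : Set (Euc d)) : Prop :=
  IsExposed ℝ P F ∧ F ≠ P ∧ F.Nonempty

/-- The vertex set of a polytope: its set of extreme points. -/
def vertSet {d : ℕ} (P : Set (Euc d)) : Set (Euc d) :=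
  Set.extremePoints ℝ P

/-- The number of vertices of a polytope. -/
def vertCount {d : ℕ} (P : Set (Euc d)) : ℕ := (vertSet P).ncard

/-- `faceCount P k` is `f_k(P)`, the number of `k`-dimensional (proper) faces of `P`. -/
def faceCount {d : ℕ} (P : Set (Euc d)) (k : ℕ) : ℕ :=
  {F : Set (Euc d) | IsProperFaceOf P F ∧ setDim F = k}.ncard

/-- The moment curve `t ↦ (t, t², …, t^δ)` in `E^δ`. -/
def momentCurve (δ : ℕ) (t : ℝ) : Euc δ := fun i => t ^ ((i : ℕ) + 1)

/-- A standard realization of the cyclic `δ`-polytope `C_δ(n)` with `n` vertices: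
the convex hull of `n` distinct points on the moment curve. -/
def cyclicPolytope (δ n : ℕ) : Set (Euc δ) :=
  convexHull ℝ (momentCurve δ '' (Set.range fun j : Fin n => (j : ℝ) + 1))

/-- `S` is the vertex set of a proper face of `P` of dimension `|S| - 1`. -/
def IsSimplexFaceVertexSet {d : ℕ} (P S : Set (Euc d)) : Prop :=
  ∃ F : Set (Euc d), IsProperFaceOf P F ∧ vertSet F = S ∧ setDim F + 1 = S.ncard

/-- A polytope `P` is `(V1; k)`-bineighborly: `V1` is a nonempty proper subset of the vertex
set of `P`, and for all nonempty `S1 ⊆ V1` and `S2 ⊆ V ∖ V1` with `|S1| + |S2| ≤ k`,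
the set `S1 ∪ S2` is the vertex set of a face of `P` of dimension `|S1| + |S2| - 1`. -/
def PolytopeBineighborly {d : ℕ} (P V1 : Set (Euc d)) (k : ℕ) : Prop :=
  V1.Nonempty ∧ V1 ⊂ vertSet P ∧
    ∀ S1 S2 : Set (Euc d), S1.Nonempty → S2.Nonempty →
      S1 ⊆ V1 → S2 ⊆ vertSet P \ V1 → S1.ncard + S2.ncard ≤ k →
        IsSimplexFaceVertexSet P (S1 ∪ S2)

/-- A polytope is `k`-neighborly if every nonempty subset of at most `k` of its vertices is
the vertex set of a face. -/
def PolytopeNeighborly {d : ℕ} (P : Set (Euc d)) (k : ℕ) : Prop :=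
  ∀ S : Set (Euc d), S ⊆ vertSet P → S.Nonempty → S.ncard ≤ k →
    ∃ F : Set (Euc d), IsProperFaceOf P F ∧ vertSet F = S

/-- Embed `E^d` into the hyperplane `{x_{d+1} = c}` of `E^{d+1}`. -/
def lift {d : ℕ} (c : ℝ) (x : Euc d) : Euc (d + 1) := Fin.snoc x c

/-- The Cayley polytope `CH_{d+1}({P1, P2})` of `P1` embedded in `{x_{d+1} = 0}` and
`P2` embedded in `{x_{d+1} = 1}`. -/
def cayley {d : ℕ} (P1 P2 : Set (Euc d)) : Set (Euc (d + 1)) :=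
  convexHull ℝ (lift 0 '' P1 ∪ lift 1 '' P2)

/-- `ubTerm n d k = binom (n - d - 2 + k) k` (equal to the true binomial for `n ≥ d + 1`). -/
def ubTerm (n d k : ℕ) : ℕ := (n + k - (d + 2)).choose k

/-- The upper bound for `f_{k-1}(P1 ⊕ P2)`:
`f_k(C_{d+1}(n1+n2)) - ∑_{i=0}^{⌊(d+1)/2⌋} binom(d+1-i, k+1-i) (binom(n1-d-2+i, i) + binom(n2-d-2+i, i))`. -/
def minkBound (d n1 n2 k : ℕ) : ℤ :=
  (faceCount (cyclicPolytope (d + 1) (n1 + n2)) k : ℤ)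
    - ∑ i ∈ Finset.range ((d + 1) / 2 + 1),
        (if i ≤ k + 1 then ((d + 1 - i).choose (k + 1 - i) : ℤ) else 0)
          * ((ubTerm n1 d i : ℤ) + (ubTerm n2 d i : ℤ))

/-- A polytopal complex in `E^N`: a finite nonempty collection of polytopes containing `∅`,
closed under taking faces, such that pairwise intersections are faces of both. -/
structure PolyComplex (N : ℕ) where
  faces : Set (Set (Euc N))
  finite_faces : faces.Finite
  empty_mem : ∅ ∈ faces
  polytope_mem : ∀ F ∈ faces, IsPolytope F
  down_closed : ∀ F ∈ faces, ∀ G : Set (Euc N), IsExposed ℝ F G → G ∈ faces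
  inter_face : ∀ F ∈ faces, ∀ G ∈ faces, IsExposed ℝ F (F ∩ G) ∧ IsExposed ℝ G (F ∩ G)

namespace PolyComplex

/-- The vertex set of a complex: its `0`-dimensional faces. -/
def verts {N : ℕ} (C : PolyComplex N) : Set (Euc N) := {v : Euc N | {v} ∈ C.faces}

/-- `C` is a (pure-dimension-bounded) `d`-complex: all faces have dimension at most `d`
and some face has dimension exactly `d`. -/
def IsDComplex {N : ℕ} (C : PolyComplex N) (d : ℕ) : Prop :=
  (∀ F ∈ C.faces, setDim F ≤ d) ∧ ∃ F ∈ C.faces, setDim F = d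

/-- A complex `C` is `(V1; k)`-bineighborly. -/
def Bineighborly {N : ℕ} (C : PolyComplex N) (V1 : Set (Euc N)) (k : ℕ) : Prop :=
  V1.Nonempty ∧ V1 ⊂ C.verts ∧
    ∀ S1 S2 : Set (Euc N), S1.Nonempty → S2.Nonempty →
      S1 ⊆ V1 → S2 ⊆ C.verts \ V1 → S1.ncard + S2.ncard ≤ k →
        ∃ F ∈ C.faces, vertSet F = S1 ∪ S2 ∧ setDim F + 1 = S1.ncard + S2.ncard

/-- A complex is `k`-neighborly if every nonempty subset of at most `k` of its vertices is
the vertex set of a face. -/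
def Neighborly {N : ℕ} (C : PolyComplex N) (k : ℕ) : Prop :=
  ∀ S : Set (Euc N), S ⊆ C.verts → S.Nonempty → S.ncard ≤ k →
    ∃ F ∈ C.faces, vertSet F = S

end PolyComplex

/-- `F` is a simplex: the convex hull of an affinely independent finite point set. -/
def IsSimplexSet {d : ℕ} (F : Set (Euc d)) : Prop :=
  ∃ S : Finset (Euc d),
    AffineIndependent ℝ (fun v : {x // x ∈ S} => (v : Euc d)) ∧
      F = convexHull ℝ (S : Set (Euc d))

/-- A simplicial polytope: all its proper faces are simplices. -/
def IsSimplicialPolytope {d : ℕ} (P : Set (Euc d)) : Prop :=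
  IsPolytope P ∧ ∀ F : Set (Euc d), IsProperFaceOf P F → IsSimplexSet F

/-- The collection `𝓕` of proper faces of the Cayley polytope of `P1`, `P2` having at least one
vertex in (the embedded copy of) each of `P1` and `P2`. -/
def cayleyFaces {d : ℕ} (P1 P2 : Set (Euc d)) : Set (Set (Euc (d + 1))) :=
  {F : Set (Euc (d + 1)) | IsProperFaceOf (cayley P1 P2) F ∧
    (vertSet F ∩ lift 0 '' P1).Nonempty ∧ (vertSet F ∩ lift 1 '' P2).Nonempty}

/-- `fFm1 P1 P2 k = f_{k-1}(𝓕)`, with the convention `f_{-1}(𝓕) = -1`. -/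
def fFm1 {d : ℕ} (P1 P2 : Set (Euc d)) : ℕ → ℤ
  | 0 => -1
  | (k + 1) => (({F ∈ cayleyFaces P1 P2 | setDim F = k} : Set (Set (Euc (d + 1)))).ncard : ℤ)

/-- The `h`-vector of `𝓕`: `h_k(𝓕) = ∑_{i=0}^{k} (-1)^{k-i} binom(d+1-i, d+1-k) f_{i-1}(𝓕)`. -/
def hF {d : ℕ} (P1 P2 : Set (Euc d)) (k : ℕ) : ℤ :=
  ∑ i ∈ Finset.range (k + 1),
    (-1 : ℤ) ^ (k - i) * ((d + 1 - i).choose (d + 1 - k) : ℤ) * fFm1 P1 P2 i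

/-- `fBdm1 P k = f_{k-1}(∂P)`, with `f_{-1}(∂P) = 1`. -/
def fBdm1 {d : ℕ} (P : Set (Euc d)) : ℕ → ℤ
  | 0 => 1
  | (k + 1) => (faceCount P k : ℤ)

/-- The `h`-vector of the boundary complex of a `d`-polytope `P ⊆ E^d`:
`h_k(∂P) = ∑_{i=0}^{k} (-1)^{k-i} binom(d-i, d-k) f_{i-1}(∂P)`. -/
def hBd {d : ℕ} (P : Set (Euc d)) (k : ℕ) : ℤ :=
  ∑ i ∈ Finset.range (k + 1),
    (-1 : ℤ) ^ (k - i) * ((d - i).choose (d - k) : ℤ) * fBdm1 P i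

/-- The `g`-vector of `∂P`: `g_0 = h_0 (= 1)` and `g_k = h_k - h_{k-1}`, with the
convention `h_{d+1}(∂P) = 0`. -/
def gBd {d : ℕ} (P : Set (Euc d)) (k : ℕ) : ℤ :=
  (if k ≤ d then hBd P k else 0)
    - (if k = 0 then 0 else if k - 1 ≤ d then hBd P (k - 1) else 0)

/-- `fCycm1 δ n k = f_{k-1}(C_δ(n))`, with `f_{-1} = 1`. -/
def fCycm1 (δ n k : ℕ) : ℤ :=
  if k = 0 then 1 else (faceCount (cyclicPolytope δ n) (k - 1) : ℤ)

/-- The upper bound for `f_{k-1}(𝓕)`: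
`f_{k-1}(C_{d+1}(n1+n2)) - ∑_{i=0}^{⌊(d+1)/2⌋} binom(d+1-i, k-i)(binom(n1-d-2+i,i)+binom(n2-d-2+i,i))`. -/
def cayleyBound (d n1 n2 k : ℕ) : ℤ :=
  fCycm1 (d + 1) (n1 + n2) k
    - ∑ i ∈ Finset.range ((d + 1) / 2 + 1),
        (if i ≤ k then ((d + 1 - i).choose (k - i) : ℤ) else 0)
          * ((ubTerm n1 d i : ℤ) + (ubTerm n2 d i : ℤ))

/-- The moment-like curve `γ1(t; ζ) = (t, ζ t^d, t², t³, …, t^{d-1}, 0)` in `E^{d+1}`. -/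
def gamma1 (d : ℕ) (ζ t : ℝ) : Euc (d + 1) := fun i =>
  if (i : ℕ) = 0 then t
  else if (i : ℕ) = 1 then ζ * t ^ d
  else if (i : ℕ) = d then 0
  else t ^ (i : ℕ)

/-- The moment-like curve `γ2(s; ζ) = (ζ s^d, s, s², s³, …, s^{d-1}, 1)` in `E^{d+1}`. -/
def gamma2 (d : ℕ) (ζ s : ℝ) : Euc (d + 1) := fun i =>
  if (i : ℕ) = 0 then ζ * s ^ d
  else if (i : ℕ) = 1 then s
  else if (i : ℕ) = d then 1
  else s ^ (i : ℕ)

/-- The `(k+ℓ) × (k+ℓ)` matrix whose determinant is `D_{k,ℓ}(τ)`: rows are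
`(1,…,1,0,…,0)`, `(x₁τ,…,x_kτ,0,…,0)`, `(0,…,0,1,…,1)`, `(0,…,0,y₁,…,y_ℓ)` and
`(x₁^pτ^p,…,x_k^pτ^p,y₁^p,…,y_ℓ^p)` for `p = 2, …, k+ℓ-3`. -/
def Dmat (k l : ℕ) (x : Fin k → ℝ) (y : Fin l → ℝ) (τ : ℝ) :
    Matrix (Fin (k + l)) (Fin (k + l)) ℝ :=
  Matrix.of fun r c =>
    have hcl : (c : ℕ) < k + l := c.isLt
    if hc : (c : ℕ) < k then
      if (r : ℕ) = 0 then 1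
      else if (r : ℕ) = 1 then x ⟨(c : ℕ), hc⟩ * τ
      else if (r : ℕ) = 2 then 0
      else if (r : ℕ) = 3 then 0
      else (x ⟨(c : ℕ), hc⟩ * τ) ^ ((r : ℕ) - 2)
    else
      have hck : (c : ℕ) - k < l := by omega
      if (r : ℕ) = 0 then 0
      else if (r : ℕ) = 1 then 0
      else if (r : ℕ) = 2 then 1
      else if (r : ℕ) = 3 then y ⟨(c : ℕ) - k, hck⟩
      else y ⟨(c : ℕ) - k, hck⟩ ^ ((r : ℕ) - 2)

/-- The exponent vector `μ = (0, 1, k, k+1, …, k+ℓ-3)`. -/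
def muExp (k i : ℕ) : ℕ := if i = 0 then 0 else if i = 1 then 1 else k + i - 2

/-- The Vandermonde determinant `VD(x) = ∏_{i<j} (x_j - x_i)`. -/
def VDprod {k : ℕ} (x : Fin k → ℝ) : ℝ :=
  ∏ p ∈ Finset.univ.filter (fun p : Fin k × Fin k => p.1 < p.2), (x p.2 - x p.1)

/-- The generalized Vandermonde determinant `GVD(y; μ) = det (y_j^{μ_i})` with exponent
vector `μ = (0, 1, k, k+1, …, k+ℓ-3)`. -/
def GVDdet (k : ℕ) {l : ℕ} (y : Fin l → ℝ) : ℝ :=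
  (Matrix.of fun i j : Fin l => y j ^ muExp k (i : ℕ)).det

/-- `binom(a, b)` for an integer lower index, zero when `b < 0` or `b > a`. -/
def zchoose (a : ℕ) (b : ℤ) : ℝ := if 0 ≤ b then (a.choose b.toNat : ℝ) else 0

section AuxSimplex

open Finset in
/-- If `T` is an affinely independent finite set, then the convex hull of any nonempty
subset `S ⊆ T` is an exposed face of the convex hull of `T`. -/
lemma isExposed_convexHull_of_affineIndependent {N : ℕ} {T : Finset (Euc N)}
    (hT : AffineIndependent ℝ (fun p : (T : Set (Euc N)) => (p : Euc N)))
    {S : Finset (Euc N)} (hS : S ⊆ T) (hSne : S.Nonempty) :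
    IsExposed ℝ (convexHull ℝ (T : Set (Euc N))) (convexHull ℝ (S : Set (Euc N))) := by
  classical
  obtain ⟨t, hTt, hti, htt⟩ := exists_subset_affineIndependent_affineSpan_eq_top hT
  let b : AffineBasis t ℝ (Euc N) := ⟨fun p => ↑p, hti, by rwa [Subtype.range_coe]⟩
  have hbcoe : ∀ j : t, b j = ↑j := fun j => rfl
  -- the barycentric coordinate of any point of a convex combination
  have key : ∀ (U : Finset (Euc N)), ((U : Set (Euc N)) ⊆ (T : Set (Euc N))) →
      ∀ (w : Euc N → ℝ), (∑ y ∈ U, w y) = 1 → ∀ (i : t),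
        b.coord i (∑ y ∈ U, w y • y) = if (i : Euc N) ∈ U then w ↑i else 0 := by
    intro U hU w hw1 i
    have hUt : ∀ {y : Euc N}, y ∈ U → y ∈ t := fun hy => hTt (hU hy)
    let emb : {y // y ∈ U} ↪ t :=
      ⟨fun y => ⟨y.1, hUt y.2⟩, by intro a c h; simp only [Subtype.mk.injEq] at h; exact Subtype.ext h⟩
    let tU : Finset t := U.attach.map emb
    let w' : t → ℝ := fun j => w ↑j
    have hw'1 : ∑ j ∈ tU, w' j = 1 := by
      rw [Finset.sum_map]
      exact (Finset.sum_attach U w).trans hw1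
    have hcomb : tU.affineCombination ℝ (b : t → Euc N) w' = ∑ y ∈ U, w y • y := by
      rw [Finset.affineCombination_eq_linear_combination _ _ _ hw'1, Finset.sum_map]
      simp only [Function.Embedding.coeFn_mk, hbcoe, emb, w']
      exact Finset.sum_attach U fun y => w y • y
    by_cases hiU : (i : Euc N) ∈ U
    · have hitU : i ∈ tU :=
        Finset.mem_map.2 ⟨⟨↑i, hiU⟩, Finset.mem_attach _ _, Subtype.ext rfl⟩
      rw [← hcomb, b.coord_apply_combination_of_mem hitU hw'1, if_pos hiU]
    · have hitU : i ∉ tU := by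
        intro h
        obtain ⟨y, _, hy⟩ := Finset.mem_map.1 h
        exact hiU ((congrArg Subtype.val hy) ▸ y.2)
      rw [← hcomb, b.coord_apply_combination_of_notMem hitU hw'1, if_neg hiU]
    -- the `S`-indexed subset of coordinates
  have hSt : ∀ {y : Euc N}, y ∈ S → y ∈ t := fun hy => hTt (hS hy)
  let embS : {y // y ∈ S} ↪ t :=
    ⟨fun y => ⟨y.1, hSt y.2⟩, by intro a c h; simp only [Subtype.mk.injEq] at h; exact Subtype.ext h⟩
  let tS : Finset t := S.attach.map embS
  -- the affine functional
  let g : Euc N → ℝ := fun x => ∑ i ∈ tS, b.coord i x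
  have hg : ∀ (U : Finset (Euc N)), ((U : Set (Euc N)) ⊆ (T : Set (Euc N))) →
      ∀ (w : Euc N → ℝ), (∑ y ∈ U, w y) = 1 →
        g (∑ y ∈ U, w y • y) = ∑ y ∈ S, (if y ∈ U then w y else 0) := by
    intro U hU w hw1
    have : ∀ i ∈ tS, b.coord i (∑ y ∈ U, w y • y) = if (i : Euc N) ∈ U then w ↑i else 0 :=
      fun i _ => key U hU w hw1 i
    rw [show g (∑ y ∈ U, w y • y) = ∑ i ∈ tS, b.coord i (∑ y ∈ U, w y • y) from rfl,
      Finset.sum_congr rfl this, Finset.sum_map]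
    simp only [Function.Embedding.coeFn_mk, embS]
    exact Finset.sum_attach S fun y => if y ∈ U then w y else 0
  -- value of `g` on `convexHull S` and on `convexHull T`
  have hgS : ∀ x ∈ convexHull ℝ (S : Set (Euc N)), g x = 1 := by
    intro x hx
    obtain ⟨w, hw0, hw1, hwx⟩ := Finset.mem_convexHull'.1 hx
    rw [← hwx, hg S (Finset.coe_subset.2 hS) w hw1]
    simp [hw1]
  have hgT : ∀ x ∈ convexHull ℝ (T : Set (Euc N)), g x ≤ 1 := by
    intro x hx
    obtain ⟨w, hw0, hw1, hwx⟩ := Finset.mem_convexHull'.1 hx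
    rw [← hwx, hg T subset_rfl w hw1]
    calc ∑ y ∈ S, (if y ∈ T then w y else 0) = ∑ y ∈ S, w y := by
          refine Finset.sum_congr rfl fun y hy => if_pos (hS hy)
      _ ≤ ∑ y ∈ T, w y := Finset.sum_le_sum_of_subset_of_nonneg hS fun y hy _ => hw0 y hy
      _ = 1 := hw1
  -- linear part of `g`
  let l₀ : Euc N →ₗ[ℝ] ℝ := ∑ i ∈ tS, (b.coord i).linear
  have hl₀ : ∀ x, l₀ x = g x - g 0 := by
    intro x
    rw [LinearMap.coe_sum, Finset.sum_apply]
    have : ∀ i ∈ tS, (b.coord i).linear x = b.coord i x - b.coord i 0 := by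
      intro i _
      have := AffineMap.decomp' (b.coord i)
      exact congrFun this x
    rw [Finset.sum_congr rfl this, Finset.sum_sub_distrib]
  have hcmp : ∀ x y : Euc N, l₀ y ≤ l₀ x ↔ g y ≤ g x := by
    intro x y; rw [hl₀, hl₀]; exact sub_le_sub_iff_right _
  intro _
  refine ⟨LinearMap.toContinuousLinearMap l₀, ?_⟩
  ext x
  simp only [Set.mem_sep_iff, LinearMap.coe_toContinuousLinearMap']
  constructor
  · intro hx
    refine ⟨convexHull_mono (Finset.coe_subset.2 hS) hx, fun y hy => ?_⟩
    rw [hcmp]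
    rw [hgS x hx]
    exact hgT y hy
  · rintro ⟨hxT, hmax⟩
    obtain ⟨s0, hs0⟩ := hSne
    have hs0' : (s0 : Euc N) ∈ convexHull ℝ (S : Set (Euc N)) :=
      subset_convexHull ℝ _ (Finset.mem_coe.2 hs0)
    have h1 : (1 : ℝ) ≤ g x := by
      have := (hcmp x s0).1 (hmax s0 (convexHull_mono (Finset.coe_subset.2 hS) hs0'))
      rwa [hgS s0 hs0'] at this
    obtain ⟨w, hw0, hw1, hwx⟩ := Finset.mem_convexHull'.1 hxT
    have hgx : g x = ∑ y ∈ S, w y := by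
      rw [← hwx, hg T subset_rfl w hw1]
      exact Finset.sum_congr rfl fun y hy => if_pos (hS hy)
    have hzero : ∀ y ∈ T, y ∉ S → w y = 0 := by
      by_contra hcon
      push_neg at hcon
      obtain ⟨y0, hy0T, hy0S, hy0⟩ := hcon
      have hlt : ∑ y ∈ S, w y < ∑ y ∈ T, w y := by
        refine Finset.sum_lt_sum_of_subset hS hy0T hy0S ?_ fun i hi _ => hw0 i hi
        exact lt_of_le_of_ne (hw0 y0 hy0T) (Ne.symm hy0)
      rw [hw1] at hlt
      rw [hgx] at h1
      linarith
    refine Finset.mem_convexHull'.2 ⟨w, fun y hy => hw0 y (hS hy), ?_, ?_⟩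
    · have : ∑ y ∈ S, w y = g x := hgx.symm
      have h2 : g x ≤ 1 := hgT x hxT
      have hone : g x = 1 := le_antisymm h2 h1
      rw [this, hone]
    · rw [← hwx]
      exact Finset.sum_subset (f := fun y => w y • y) hS fun y hyT hyS => by simp [hzero y hyT hyS]

/-- The vertex set of the convex hull of an affinely independent finite set is the set itself. -/
lemma vertSet_convexHull_of_affineIndependent {N : ℕ} {T : Finset (Euc N)}
    (hT : AffineIndependent ℝ (fun p : (T : Set (Euc N)) => (p : Euc N))) :
    vertSet (convexHull ℝ (T : Set (Euc N))) = (T : Set (Euc N)) := by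
  refine Set.Subset.antisymm extremePoints_convexHull_subset fun x hx => ?_
  have h1 : IsExposed ℝ (convexHull ℝ (T : Set (Euc N)))
      (convexHull ℝ (({x} : Finset (Euc N)) : Set (Euc N))) :=
    isExposed_convexHull_of_affineIndependent hT
      (Finset.singleton_subset_iff.2 hx) ⟨x, Finset.mem_singleton_self x⟩
  rw [Finset.coe_singleton, convexHull_singleton] at h1
  exact h1.isExtreme.mem_extremePoints

/-- A polytope has finitely many vertices and is the convex hull of its vertex set. -/
lemma polytope_hull_vertSet {N : ℕ} {F : Set (Euc N)} (h : IsPolytope F) :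
    (vertSet F).Finite ∧ F = convexHull ℝ (vertSet F) := by
  obtain ⟨A, hA, rfl⟩ := h
  have hsub : vertSet (convexHull ℝ A) ⊆ A := extremePoints_convexHull_subset
  have hfin : (vertSet (convexHull ℝ A)).Finite := hA.subset hsub
  refine ⟨hfin, ?_⟩
  have h1 := closure_convexHull_extremePoints (hA.isCompact_convexHull ℝ) (convex_convexHull ℝ A)
  have h2 : IsClosed (convexHull ℝ (extremePoints ℝ (convexHull ℝ A))) :=
    (hfin.isCompact_convexHull ℝ).isClosed
  rw [h2.closure_eq] at h1
  exact h1.symm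

/-- If a face of a complex is a simplex (its dimension is one less than its number of
vertices), then every nonempty subset of its vertices is the vertex set of a face. -/
lemma face_of_simplex_face {N : ℕ} (C : PolyComplex N) {F : Set (Euc N)} (hF : F ∈ C.faces)
    (hdim : setDim F + 1 = (vertSet F).ncard)
    {S : Set (Euc N)} (hS : S ⊆ vertSet F) (hSne : S.Nonempty) :
    ∃ G ∈ C.faces, vertSet G = S := by
  classical
  obtain ⟨hfin, hFeq⟩ := polytope_hull_vertSet (C.polytope_mem F hF)
  set U : Set (Euc N) := vertSet F with hU
  have hUne : U.Nonempty := hSne.mono hS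
  have hUcard : 0 < U.ncard := (Set.ncard_pos hfin).2 hUne
  obtain ⟨n, hn⟩ : ∃ n, U.ncard = n + 1 := ⟨U.ncard - 1, by omega⟩
  have hc : Fintype.card (hfin.toFinset : Set (Euc N)) = n + 1 := by
    calc Fintype.card (hfin.toFinset : Set (Euc N)) = Nat.card (hfin.toFinset : Set (Euc N)) :=
          Nat.card_eq_fintype_card.symm
      _ = ((hfin.toFinset : Set (Euc N))).ncard := Nat.card_coe_set_eq _
      _ = U.ncard := by rw [hfin.coe_toFinset]
      _ = n + 1 := hn
  have hind : AffineIndependent ℝ (fun p : (hfin.toFinset : Set (Euc N)) => (p : Euc N)) := by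
    rw [affineIndependent_iff_finrank_vectorSpan_eq ℝ _ hc]
    have hrange : Set.range (fun p : (hfin.toFinset : Set (Euc N)) => (p : Euc N)) = U := by
      rw [Subtype.range_coe, Set.Finite.coe_toFinset]
    rw [hrange]
    have hsd : setDim F = Module.finrank ℝ (vectorSpan ℝ U) := by
      rw [setDim, hFeq, affineSpan_convexHull, direction_affineSpan]
    omega
  have hSfin : S.Finite := hfin.subset hS
  have hSfT : hSfin.toFinset ⊆ hfin.toFinset := by
    rw [Set.Finite.toFinset_subset, Set.Finite.coe_toFinset]
    exact hS
  have hSfne : hSfin.toFinset.Nonempty := by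
    rwa [Set.Finite.toFinset_nonempty]
  have hexp := isExposed_convexHull_of_affineIndependent hind hSfT hSfne
  rw [hSfin.coe_toFinset, hfin.coe_toFinset] at hexp
  rw [← hFeq] at hexp
  refine ⟨convexHull ℝ S, C.down_closed F hF _ hexp, ?_⟩
  have hindS : AffineIndependent ℝ (fun p : (hSfin.toFinset : Set (Euc N)) => (p : Euc N)) := by
    refine hind.mono ?_
    rw [hSfin.coe_toFinset, hfin.coe_toFinset]
    exact hS
  have := vertSet_convexHull_of_affineIndependent hindS
  rwa [hSfin.coe_toFinset] at this

end AuxSimplex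

/-- a `(V1; k)`-bineighborly polytopal `d`-complex with `k ≥ 2` is
`(k-1)`-neighborly. -/
theorem statement_6 (N d k : ℕ) (hk : 2 ≤ k)
    (C : PolyComplex N) (hdc : C.IsDComplex d)
    (V1 : Set (Euc N)) (hbn : C.Bineighborly V1 k) :
    C.Neighborly (k - 1) := by
  obtain ⟨hV1ne, hV1ss, hmain⟩ := hbn
  intro S hSsub hSne hScard
  have hvfin : C.verts.Finite := by
    have hpre : C.verts = (fun v : Euc N => ({v} : Set (Euc N))) ⁻¹' C.faces := rfl
    rw [hpre]
    exact C.finite_faces.preimage (Set.injOn_of_injective Set.singleton_injective)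
  have hSfin : S.Finite := hvfin.subset hSsub
  by_cases h1 : (S ∩ V1).Nonempty
  · by_cases h2 : (S \ V1).Nonempty
    · -- both parts nonempty: apply bineighborliness directly
      have hd : (S ∩ V1).ncard + (S \ V1).ncard = S.ncard :=
        Set.ncard_inter_add_ncard_diff_eq_ncard S V1 hSfin
      obtain ⟨F, hF, hvF, hdimF⟩ := hmain (S ∩ V1) (S \ V1) h1 h2 Set.inter_subset_right
        (fun x hx => ⟨hSsub hx.1, hx.2⟩) (by omega)
      have hvFS : vertSet F = S := by rw [hvF, Set.inter_union_diff]
      exact face_of_simplex_face C hF (by rw [hvFS]; omega) (hvFS ▸ Set.Subset.rfl) hSne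
    · -- S ⊆ V1 : add an auxiliary vertex outside V1
      have hSV1 : S ⊆ V1 := by
        intro x hx
        by_contra hxV
        exact h2 ⟨x, hx, hxV⟩
      obtain ⟨w, hwv, hwn⟩ := Set.exists_of_ssubset hV1ss
      have hwS : w ∉ S := fun h => hwn (hSV1 h)
      have hw1 : ({w} : Set (Euc N)).ncard = 1 := Set.ncard_singleton w
      obtain ⟨F, hF, hvF, hdimF⟩ := hmain S {w} hSne (Set.singleton_nonempty w) hSV1
        (Set.singleton_subset_iff.2 ⟨hwv, hwn⟩) (by omega)
      have hcard : (vertSet F).ncard = S.ncard + 1 := by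
        rw [hvF, Set.ncard_union_eq (Set.disjoint_singleton_right.2 hwS) hSfin
          (Set.finite_singleton w), hw1]
      exact face_of_simplex_face C hF (by omega)
        (hvF ▸ Set.subset_union_left) hSne
  · -- S ∩ V1 = ∅ : add an auxiliary vertex inside V1
    obtain ⟨v, hv⟩ := hV1ne
    have hvS : v ∉ S := fun h => h1 ⟨v, h, hv⟩
    have hS2 : S ⊆ C.verts \ V1 := fun x hx => ⟨hSsub hx, fun hxV => h1 ⟨x, hx, hxV⟩⟩
    have hv1 : ({v} : Set (Euc N)).ncard = 1 := Set.ncard_singleton v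
    obtain ⟨F, hF, hvF, hdimF⟩ := hmain {v} S (Set.singleton_nonempty v) hSne
      (Set.singleton_subset_iff.2 hv) hS2 (by omega)
    have hcard : (vertSet F).ncard = 1 + S.ncard := by
      rw [hvF, Set.ncard_union_eq (Set.disjoint_singleton_left.2 hvS)
        (Set.finite_singleton v) hSfin, hv1]
    exact face_of_simplex_face C hF (by omega)
      (hvF ▸ Set.subset_union_right) hSne
end
end

section
/- Fix integers k ≥ 2 and ℓ ≥ 2 with k+ℓ odd, and let 0 < x_1 < x_2 < … < x_k and 0 < y_1 < y_2 < … < y_ℓ be real numbers. For τ > 0 let D_{k,ℓ}(τ) be the (k+ℓ)×(k+ℓ) determinant whose first row is (1,…,1,0,…,0) (k ones followed by ℓ zeros), second row is (x_1τ,…,x_kτ,0,…,0), third row is (0,…,0,1,…,1) (k zeros followed by ℓ ones), fourth row is (0,…,0,y_1,…,y_ℓ), and whose (p+3)-rd row, for 2 ≤ p ≤ k+ℓ−3, is (x_1^p τ^p, …, x_k^p τ^p, y_1^p, …, y_ℓ^p). Then there exists τ_0 > 0 (depending on the x_i's, the y_j's, k, and ℓ) such that for all τ ∈ (0, τ_0),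 D_{k,ℓ}(τ) > 0. -/
open Set Pointwise

noncomputable section

section Statement16Aux

open Real Matrix

/-- An exponential sum with `s+1` nonzero terms and distinct real exponents cannot vanish
at `s+1` distinct positive points. -/
lemma expsum_zeros : ∀ (s : ℕ) (c α : Fin (s+1) → ℝ), (∀ i, c i ≠ 0) →
    Function.Injective α → ∀ t : Fin (s+1) → ℝ, (∀ i, 0 < t i) → StrictMono t →
    ¬ (∀ i, ∑ j, c j * t i ^ α j = 0) := by
  intro s
  induction s with
  | zero =>
    intro c α hc hα t ht0 htm h
    have h0 := h 0
    rw [Fin.sum_univ_one] at h0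
    exact hc 0 ((mul_eq_zero.1 h0).resolve_right
      (ne_of_gt (Real.rpow_pos_of_pos (ht0 0) _)))
  | succ s IH =>
    intro c α hc hα t ht0 htm h
    -- divide by t ^ α 0 and differentiate
    set g : ℝ → ℝ := fun u => ∑ j, c j * u ^ (α j - α 0) with hgdef
    set g' : ℝ → ℝ := fun u => ∑ j, c j * ((α j - α 0) * u ^ (α j - α 0 - 1)) with hg'def
    have hgzero : ∀ i, g (t i) = 0 := by
      intro i
      have : g (t i) = (∑ j, c j * t i ^ α j) / t i ^ α 0 := by
        rw [hgdef, Finset.sum_div]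
        refine Finset.sum_congr rfl fun j _ => ?_
        rw [Real.rpow_sub (ht0 i), mul_div_assoc]
      rw [this, h i, zero_div]
    have hder : ∀ u : ℝ, 0 < u → HasDerivAt g (g' u) u := by
      intro u hu
      refine HasDerivAt.fun_sum fun j _ => ?_
      exact (Real.hasDerivAt_rpow_const (Or.inl (ne_of_gt hu))).const_mul (c j)
    have hcont : ∀ (a b : ℝ), 0 < a → ContinuousOn g (Icc a b) := by
      intro a b ha
      refine continuousOn_finset_sum _ fun j _ => continuousOn_const.mul ?_
      exact fun u hu => (Real.continuousAt_rpow_const u (α j - α 0)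
        (Or.inl (ne_of_gt (lt_of_lt_of_le ha hu.1)))).continuousWithinAt
    -- Rolle between consecutive zeros
    have hroll : ∀ i : Fin (s+1), ∃ u ∈ Ioo (t i.castSucc) (t i.succ), g' u = 0 := by
      intro i
      have hlt : t i.castSucc < t i.succ := htm Fin.castSucc_lt_succ
      have h0 : 0 < t i.castSucc := ht0 _
      refine exists_hasDerivAt_eq_zero hlt (hcont _ _ h0) (by rw [hgzero, hgzero]) ?_
      intro u hu
      exact hder u (lt_trans h0 hu.1)
    choose u hu1 hu2 using hroll
    have hu0 : ∀ i, 0 < u i := fun i => lt_trans (ht0 _) (hu1 i).1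
    have hum : StrictMono u := by
      intro i j hij
      calc u i < t i.succ := (hu1 i).2
        _ ≤ t j.castSucc := htm.monotone (by
            rw [Fin.le_def]; rw [Fin.lt_def] at hij; simp; omega)
        _ < u j := (hu1 j).1
    -- the derivative is an exponential sum with s+1 terms
    refine IH (fun j => c j.succ * (α j.succ - α 0)) (fun j => α j.succ - α 0 - 1)
      (fun j => mul_ne_zero (hc _) (sub_ne_zero.2 fun hE => (Fin.succ_ne_zero j) (hα hE)))
      (fun a b hab => by
        dsimp only at hab
        have : α a.succ = α b.succ := by linarith
        exact Fin.succ_injective _ (hα this))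
      u hu0 hum (fun i => ?_)
    have := hu2 i
    rw [hg'def] at this
    dsimp only at this ⊢
    rw [Fin.sum_univ_succ] at this
    simp only [sub_self, zero_mul, mul_zero, zero_add] at this
    rw [← this]
    refine Finset.sum_congr rfl fun j _ => by ring

/-- Generalized Vandermonde matrices with distinct real exponents at distinct positive
nodes are nonsingular. -/
lemma gvd_rpow_ne_zero (l : ℕ) (α : Fin l → ℝ) (hα : Function.Injective α)
    (y : Fin l → ℝ) (hy0 : ∀ j, 0 < y j) (hy : StrictMono y) :
    (Matrix.of fun i j : Fin l => y j ^ α i).det ≠ 0 := by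
  classical
  intro hdet
  set M : Matrix (Fin l) (Fin l) ℝ := Matrix.of fun j i : Fin l => y j ^ α i with hM
  have hMdet : M.det = 0 := by
    have hMT : M = Matrix.transpose (Matrix.of fun i j : Fin l => y j ^ α i) := rfl
    rw [hMT, Matrix.det_transpose]; exact hdet
  obtain ⟨v, hv, hMv⟩ := Matrix.exists_mulVec_eq_zero_iff.2 hMdet
  have hcomb : ∀ j : Fin l, ∑ i, v i * y j ^ α i = 0 := by
    intro j
    have := congrFun hMv j
    simp only [Matrix.mulVec, dotProduct, Matrix.of_apply, Pi.zero_apply, hM] at this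
    rw [← this]
    exact Finset.sum_congr rfl fun i _ => mul_comm _ _
  -- restrict to the support of v
  set S : Finset (Fin l) := Finset.univ.filter (fun i => v i ≠ 0) with hS
  have hSne : S.Nonempty := by
    rcases Function.ne_iff.1 hv with ⟨i, hi⟩
    exact ⟨i, Finset.mem_filter.2 ⟨Finset.mem_univ i, by simpa using hi⟩⟩
  obtain ⟨s, hs⟩ : ∃ s, S.card = s + 1 :=
    ⟨S.card - 1, by have := Finset.card_pos.2 hSne; omega⟩
  have hsl : s + 1 ≤ l := hs ▸ (S.card_le_univ.trans_eq (by simp))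
  set e := S.orderIsoOfFin hs with he
  refine expsum_zeros s (fun j => v (e j)) (fun j => α (e j))
    (fun j => (Finset.mem_filter.1 (e j).2).2)
    (fun a b hab => by
      have : (e a : Fin l) = e b := hα hab
      exact e.injective (Subtype.coe_injective this))
    (fun j => y (Fin.castLE hsl j))
    (fun j => hy0 _)
    (fun a b hab => hy (by rw [Fin.lt_def]; simpa using hab))
    (fun i => ?_)
  -- the combination vanishes at the first s+1 nodes
  have : ∑ j : Fin (s+1), v (e j) * y (Fin.castLE hsl i) ^ α (e j)
      = ∑ j ∈ S, v j * y (Fin.castLE hsl i) ^ α j := by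
    rw [← Finset.sum_coe_sort S (fun j => v j * y (Fin.castLE hsl i) ^ α j)]
    exact Equiv.sum_comp e.toEquiv (fun j : S => v (j:Fin l) * y (Fin.castLE hsl i) ^ α (j:Fin l))
  rw [this, Finset.sum_filter_of_ne (by intro x _ hne hvx; exact hne (by rw [hvx]; ring))]
  exact hcomb _

/-- Positivity of the generalized Vandermonde determinant with strictly increasing natural
exponents at increasing positive nodes. -/
lemma gvd_nat_pos (l : ℕ) (μ : Fin l → ℕ) (hμ : StrictMono μ)
    (y : Fin l → ℝ) (hy0 : ∀ j, 0 < y j) (hy : StrictMono y) :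
    0 < (Matrix.of fun i j : Fin l => y j ^ μ i).det := by
  classical
  set F : ℝ → ℝ := fun s =>
    (Matrix.of fun i j : Fin l => y j ^ ((1-s) * (μ i : ℝ) + s * (i : ℕ))).det with hF
  have hexp : ∀ s ∈ Icc (0:ℝ) 1, StrictMono (fun i : Fin l => (1-s) * (μ i : ℝ) + s * (i:ℕ)) := by
    intro s hs a b hab
    have h1 : (μ a : ℝ) < μ b := by exact_mod_cast hμ hab
    have h2 : ((a:ℕ) : ℝ) < (b:ℕ) := by exact_mod_cast hab
    dsimp only
    rcases eq_or_lt_of_le hs.1 with hs0 | hs0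
    · rw [← hs0]; simpa using h1
    · nlinarith [mul_nonneg (sub_nonneg.2 hs.2) (sub_pos.2 h1).le,
        mul_pos hs0 (sub_pos.2 h2)]
  have hne : ∀ s ∈ Icc (0:ℝ) 1, F s ≠ 0 := fun s hs =>
    gvd_rpow_ne_zero l _ (hexp s hs).injective y hy0 hy
  have hcont : Continuous F := by
    refine Continuous.matrix_det (continuous_matrix fun i j => ?_)
    have : (fun s : ℝ => (Matrix.of fun i j : Fin l =>
        y j ^ ((1-s) * (μ i : ℝ) + s * (i : ℕ))) i j)
        = fun s : ℝ => Real.exp (Real.log (y j) * ((1-s) * (μ i : ℝ) + s * (i:ℕ))) := by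
      funext s
      simp only [Matrix.of_apply]
      rw [Real.rpow_def_of_pos (hy0 j)]
    rw [this]
    fun_prop
  have hF1 : 0 < F 1 := by
    have h1 : (Matrix.of fun i j : Fin l => y j ^ ((1-(1:ℝ)) * (μ i : ℝ) + 1 * (i : ℕ)))
        = Matrix.transpose (Matrix.vandermonde y) := by
      ext i j
      simp only [Matrix.of_apply, Matrix.transpose_apply, Matrix.vandermonde_apply,
        sub_self, zero_mul, one_mul, zero_add]
      exact Real.rpow_natCast _ _
    rw [hF]
    dsimp only
    rw [h1, Matrix.det_transpose, Matrix.det_vandermonde]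
    exact Finset.prod_pos fun i _ => Finset.prod_pos fun j hj =>
      sub_pos.2 (hy (Finset.mem_Ioi.1 hj))
  have hF0 : F 0 = (Matrix.of fun i j : Fin l => y j ^ μ i).det := by
    have h1 : (Matrix.of fun i j : Fin l => y j ^ ((1-(0:ℝ)) * (μ i : ℝ) + 0 * (i : ℕ)))
        = (Matrix.of fun i j : Fin l => y j ^ μ i) := by
      ext i j
      simp only [Matrix.of_apply, sub_zero, one_mul, zero_mul, add_zero]
      exact Real.rpow_natCast _ _
    rw [hF]
    dsimp only
    rw [h1]
  by_contra hle
  push_neg at hle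
  have hle' : F 0 ≤ 0 := by rw [hF0]; exact hle
  have hF0lt : F 0 < 0 := lt_of_le_of_ne hle' (hne 0 ⟨le_refl _, zero_le_one⟩)
  have : (0:ℝ) ∈ Icc (F 0) (F 1) := ⟨le_of_lt hF0lt, le_of_lt hF1⟩
  obtain ⟨s, hs, hFs⟩ := intermediate_value_Icc zero_le_one hcont.continuousOn this
  exact hne s hs hFs

/-- The row index in which the `p`-th power sits. -/
def rrowF (p : ℕ) : ℕ := if p = 0 then 0 else if p = 1 then 1 else p + 2

/-- The power sitting in row `r` (junk at `r = 2, 3`). -/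
def prowF (r : ℕ) : ℕ := if r ≤ 1 then r else r - 2

/-- Standard basis row supported at row index `rrowF p`. -/
def erow (k l : ℕ) (p : ℕ) : Fin (k+l) → ℝ := fun r => if (r : ℕ) = rrowF p then 1 else 0

/-- The `y`-column of the matrices under consideration, as a function of the row. -/
def psirow (k l : ℕ) (y : Fin l → ℝ) (j : ℕ) : Fin (k+l) → ℝ := fun r =>
  if (r:ℕ) < 2 then 0 else (if h : j < l then y ⟨j, h⟩ else 0) ^ ((r:ℕ) - 2)

/-- The constant matrices appearing in the multilinear expansion of the determinant. -/
def Emat (k l : ℕ) (y : Fin l → ℝ) (v : Fin (k+l) → ℕ) : Matrix (Fin (k+l)) (Fin (k+l)) ℝ :=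
  Matrix.of fun c r => if (c:ℕ) < k then erow k l (v c) r else psirow k l y ((c:ℕ)-k) r

/-- The index sets of the expansion. -/
def Aset (k l : ℕ) : Fin (k+l) → Finset ℕ :=
  fun c => if (c:ℕ) < k then Finset.range (k+l-2) else {0}

lemma key_sum_erow (k l m : ℕ) (a : ℕ → ℝ) (r : Fin (k+l)) :
    (∑ p ∈ Finset.range m, a p • erow k l p) r
      = if (r:ℕ) ≠ 2 ∧ (r:ℕ) ≠ 3 ∧ prowF (r:ℕ) < m then a (prowF (r:ℕ)) else 0 := by
  rw [Finset.sum_apply]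
  simp only [Pi.smul_apply, smul_eq_mul, erow]
  by_cases hr : (r:ℕ) ≠ 2 ∧ (r:ℕ) ≠ 3 ∧ prowF (r:ℕ) < m
  · rw [if_pos hr]
    rw [Finset.sum_eq_single (prowF (r:ℕ))]
    · rw [if_pos (by simp only [rrowF, prowF] at *; split_ifs at * <;> omega), mul_one]
    · intro p hp hne
      rw [if_neg (by simp only [rrowF, prowF] at *; split_ifs at * <;> omega), mul_zero]
    · intro hnm
      exact absurd (Finset.mem_range.2 hr.2.2) hnm
  · rw [if_neg hr]
    refine Finset.sum_eq_zero fun p hp => ?_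
    rw [Finset.mem_range] at hp
    rw [if_neg (by simp only [rrowF, prowF] at *; split_ifs at * <;> omega), mul_zero]

/-- The main expansion lemma: a matrix whose first `k` columns are combinations of the
`erow`s and whose last `l` columns are `psirow`s has determinant a combination of the
determinants of the `Emat`s. -/
lemma det_expand (k l : ℕ) (y : Fin l → ℝ) (a : Fin (k+l) → ℕ → ℝ)
    (M : Matrix (Fin (k+l)) (Fin (k+l)) ℝ)
    (hxc : ∀ c : Fin (k+l), (c:ℕ) < k →
      (fun r => M r c) = ∑ p ∈ Finset.range (k+l-2), a c p • erow k l p)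
    (hyc : ∀ c : Fin (k+l), k ≤ (c:ℕ) → (fun r => M r c) = psirow k l y ((c:ℕ)-k)) :
    M.det = ∑ v ∈ Fintype.piFinset (Aset k l),
      (∏ c : Fin (k+l), if (c:ℕ) < k then a c (v c) else 1) * (Emat k l y v).det := by
  classical
  set g : Fin (k+l) → ℕ → (Fin (k+l) → ℝ) := fun c p =>
    if (c:ℕ) < k then a c p • erow k l p
    else if p = 0 then psirow k l y ((c:ℕ)-k) else 0 with hg
  have hMt : Mᵀ = fun c => ∑ p ∈ Aset k l c, g c p := by
    funext c
    by_cases h : (c:ℕ) < k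
    · have h1 : Mᵀ c = fun r => M r c := rfl
      rw [h1, hxc c h]
      simp only [Aset, hg, if_pos h]
    · have h1 : Mᵀ c = fun r => M r c := rfl
      rw [h1, hyc c (le_of_not_gt h)]
      simp only [Aset, hg, if_neg h]
      rw [Finset.sum_singleton, if_pos rfl]
  have hdet : M.det = Matrix.detRowAlternating Mᵀ := by
    rw [← Matrix.det_transpose]; rfl
  rw [hdet, hMt]
  have hexp := (Matrix.detRowAlternating (R := ℝ) (n := Fin (k+l))).toMultilinearMap.map_sum_finset
    g (Aset k l)
  rw [show ((Matrix.detRowAlternating (R := ℝ) (n := Fin (k+l))).toMultilinearMap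
      (fun c => ∑ p ∈ Aset k l c, g c p))
    = Matrix.detRowAlternating (fun c => ∑ p ∈ Aset k l c, g c p) from rfl] at hexp
  rw [hexp]
  refine Finset.sum_congr rfl fun v hv => ?_
  have hv0 : ∀ c : Fin (k+l), ¬ (c:ℕ) < k → v c = 0 := by
    intro c hc
    have := (Fintype.mem_piFinset.1 hv) c
    rw [Aset, if_neg hc] at this
    exact Finset.mem_singleton.1 this
  have hrows : (fun c => g c (v c))
      = fun (c : Fin (k+l)) => (if (c:ℕ) < k then a c (v c) else 1) • (Emat k l y v c) := by
    funext c
    by_cases h : (c:ℕ) < k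
    · have hE : Emat k l y v c = erow k l (v c) := by
        funext r; simp [Emat, if_pos h]
      simp only [hg, if_pos h, hE]
    · have hE : Emat k l y v c = psirow k l y ((c:ℕ)-k) := by
        funext r; simp [Emat, if_neg h]
      simp only [hg, if_neg h, hv0 c h, if_pos rfl, hE, one_smul]
      simp
  rw [hrows]
  have hsm := (Matrix.detRowAlternating (R := ℝ) (n := Fin (k+l))).toMultilinearMap.map_smul_univ
    (fun c => if (c:ℕ) < k then a c (v c) else 1) (fun c => Emat k l y v c)
  rw [show (Emat k l y v).det
      = Matrix.detRowAlternating (fun c => Emat k l y v c) from rfl, ← smul_eq_mul]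
  exact hsm

/-- If the exponent choice is not injective on the `x`-columns, the corresponding
expansion matrix has two equal rows, hence zero determinant. -/
lemma Emat_det_zero (k l : ℕ) (y : Fin l → ℝ) (v : Fin (k+l) → ℕ) (c c' : Fin (k+l))
    (hne : c ≠ c') (hc : (c:ℕ) < k) (hc' : (c':ℕ) < k) (hv : v c = v c') :
    (Emat k l y v).det = 0 := by
  refine Matrix.det_zero_of_row_eq hne ?_
  funext r
  simp only [Emat, Matrix.of_apply, if_pos hc, if_pos hc', hv]

/-- A sum of `k` distinct naturals is at least `0 + 1 + ⋯ + (k-1)`, strictly if some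
value is `≥ k`. -/
lemma inj_sum_lower (k : ℕ) (w : Fin k → ℕ) (hw : Function.Injective w) :
    ((∑ i ∈ Finset.range k, i) ≤ ∑ i, w i)
    ∧ ((¬ ∀ i, w i < k) → (∑ i ∈ Finset.range k, i) < ∑ i, w i) := by
  classical
  set T := Finset.image w Finset.univ with hT
  have hcard : T.card = k := by
    rw [hT, Finset.card_image_of_injective _ hw, Finset.card_univ, Fintype.card_fin]
  set f := T.orderIsoOfFin hcard with hf
  have hfs : ∀ i : Fin k, (i:ℕ) ≤ ((f i : ℕ) : ℕ) := by
    have key : ∀ n (h : n < k), n ≤ ((f ⟨n, h⟩ : ℕ) : ℕ) := by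
      intro n
      induction n with
      | zero => intro h; exact Nat.zero_le _
      | succ n ih =>
        intro h
        have h' : n < k := lt_trans (Nat.lt_succ_self n) h
        have hlt : ((f ⟨n, h'⟩ : ℕ) : ℕ) < ((f ⟨n+1, h⟩ : ℕ) : ℕ) := by
          have hmono : f ⟨n, h'⟩ < f ⟨n+1, h⟩ := by
            apply f.strictMono
            rw [Fin.lt_def]; exact Nat.lt_succ_self n
          exact_mod_cast hmono
        have := ih h'
        omega
    intro i
    have := key (i:ℕ) i.isLt
    simpa using this
  have hsum : ∑ i, w i = ∑ i : Fin k, ((f i : ℕ) : ℕ) := by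
    have h1 : ∑ a ∈ T, a = ∑ i, w i := by
      rw [hT]
      exact Finset.sum_image (fun a _ b _ hab => hw hab)
    have h2 : ∑ i : Fin k, ((f i : ℕ) : ℕ) = ∑ a : T, (a : ℕ) :=
      Equiv.sum_comp f.toEquiv (fun a : T => (a : ℕ))
    have h3 : ∑ a : T, (a : ℕ) = ∑ a ∈ T, a := Finset.sum_coe_sort T (fun a => a)
    rw [h2, h3, h1]
  have hlow : (∑ i ∈ Finset.range k, i) ≤ ∑ i, w i := by
    rw [hsum, ← Fin.sum_univ_eq_sum_range (fun i => i) k]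
    exact Finset.sum_le_sum fun i _ => hfs i
  refine ⟨hlow, fun hbig => ?_⟩
  push_neg at hbig
  obtain ⟨i0, hi0⟩ := hbig
  have hmem : w i0 ∈ T := by rw [hT]; exact Finset.mem_image_of_mem _ (Finset.mem_univ _)
  set j := f.symm ⟨w i0, hmem⟩ with hj
  have hfj : ((f j : ℕ) : ℕ) = w i0 := by rw [hj, OrderIso.apply_symm_apply]
  have hjlt : (j:ℕ) < ((f j : ℕ) : ℕ) := by
    rw [hfj]; exact lt_of_lt_of_le j.isLt hi0
  rw [hsum, ← Fin.sum_univ_eq_sum_range (fun i => i) k]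
  exact Finset.sum_lt_sum (fun i _ => hfs i) ⟨j, Finset.mem_univ j, hjlt⟩

/-- A sum of `k` distinct naturals all `< k` is exactly `0 + 1 + ⋯ + (k-1)`. -/
lemma inj_sum_eq (k : ℕ) (w : Fin k → ℕ) (hw : Function.Injective w) (hlt : ∀ i, w i < k) :
    ∑ i, w i = ∑ i ∈ Finset.range k, i := by
  classical
  set w' : Fin k → Fin k := fun i => ⟨w i, hlt i⟩ with hw'
  have hw'i : Function.Injective w' := by
    intro a b hab
    apply hw
    have := congrArg Fin.val hab
    simpa [hw'] using this
  have hbij := Finite.injective_iff_bijective.1 hw'i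
  have hcomp := Equiv.sum_comp (Equiv.ofBijective w' hbij) (fun j : Fin k => (j:ℕ))
  have h1 : ∑ i, w i = ∑ i : Fin k, ((w' i : Fin k) : ℕ) := by
    refine Finset.sum_congr rfl fun i _ => ?_; simp [hw']
  rw [h1, ← Fin.sum_univ_eq_sum_range (fun i => i) k]
  exact hcomp

/-- The truncated matrix `B` whose determinant is the leading coefficient. -/
def Bmat (k l : ℕ) (x : Fin k → ℝ) (y : Fin l → ℝ) : Matrix (Fin (k+l)) (Fin (k+l)) ℝ :=
  Matrix.of fun r c =>
    if hc : (c:ℕ) < k then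
      (if (r:ℕ) = 0 then 1 else if (r:ℕ) = 1 then x ⟨(c:ℕ), hc⟩
       else if 4 ≤ (r:ℕ) ∧ (r:ℕ) ≤ k+1 then x ⟨(c:ℕ), hc⟩ ^ ((r:ℕ)-2) else 0)
    else psirow k l y ((c:ℕ)-k) r

/-- The basic cycle on rows `2, …, k+1`. -/
def piPerm (k l : ℕ) (hk : 2 ≤ k) (hl : 2 ≤ l) : Equiv.Perm (Fin (k+l)) where
  toFun i := ⟨if 2 ≤ (i:ℕ) ∧ (i:ℕ) ≤ k then (i:ℕ)+1 else if (i:ℕ) = k+1 then 2 else (i:ℕ),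
    by have := i.isLt; split_ifs <;> omega⟩
  invFun i := ⟨if 3 ≤ (i:ℕ) ∧ (i:ℕ) ≤ k+1 then (i:ℕ)-1 else if (i:ℕ) = 2 then k+1 else (i:ℕ),
    by have := i.isLt; split_ifs <;> omega⟩
  left_inv i := by
    have := i.isLt
    ext
    simp only
    split_ifs <;> omega
  right_inv i := by
    have := i.isLt
    ext
    simp only
    split_ifs <;> omega

lemma piPerm_apply (k l : ℕ) (hk : 2 ≤ k) (hl : 2 ≤ l) (i : Fin (k+l)) :
    ((piPerm k l hk hl i : Fin (k+l)) : ℕ)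
      = if 2 ≤ (i:ℕ) ∧ (i:ℕ) ≤ k then (i:ℕ)+1 else if (i:ℕ) = k+1 then 2 else (i:ℕ) := rfl

/-- The row permutation `ρ = π²` (so that `sign ρ = 1`). -/
def rhoPerm (k l : ℕ) (hk : 2 ≤ k) (hl : 2 ≤ l) : Equiv.Perm (Fin (k+l)) :=
  piPerm k l hk hl * piPerm k l hk hl

lemma rhoPerm_apply (k l : ℕ) (hk : 2 ≤ k) (hl : 2 ≤ l) (i : Fin (k+l)) :
    ((rhoPerm k l hk hl i : Fin (k+l)) : ℕ)
      = if (i:ℕ) ≤ 1 then (i:ℕ) else if (i:ℕ) ≤ k-1 then (i:ℕ)+2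
        else if (i:ℕ) = k then 2 else if (i:ℕ) = k+1 then 3 else (i:ℕ) := by
  have hi := i.isLt
  rw [rhoPerm, Equiv.Perm.mul_apply, piPerm_apply, piPerm_apply]
  split_ifs <;> omega

lemma rhoPerm_sign (k l : ℕ) (hk : 2 ≤ k) (hl : 2 ≤ l) :
    Equiv.Perm.sign (rhoPerm k l hk hl) = 1 := by
  rw [rhoPerm, Equiv.Perm.sign_mul, ← sq, Int.units_sq]

/-- The determinant of `B` is positive. -/
lemma Bmat_det_pos (k l : ℕ) (hk : 2 ≤ k) (hl : 2 ≤ l)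
    (x : Fin k → ℝ) (y : Fin l → ℝ)
    (hx0 : ∀ i, 0 < x i) (hx : StrictMono x)
    (hy0 : ∀ j, 0 < y j) (hy : StrictMono y) :
    0 < (Bmat k l x y).det := by
  classical
  set ρ := rhoPerm k l hk hl with hρ
  set e := finSumFinEquiv (m := k) (n := l) with he
  set VdmX : Matrix (Fin k) (Fin k) ℝ := Matrix.of fun i j => x j ^ (i:ℕ) with hV
  set Gmat : Matrix (Fin l) (Fin l) ℝ := Matrix.of fun i j => y j ^ muExp k (i:ℕ) with hG
  set Cblk : Matrix (Fin k) (Fin l) ℝ :=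
    Matrix.of fun i j => Bmat k l x y (ρ (e (Sum.inl i))) (e (Sum.inr j)) with hC
  have hcoel : ∀ a : Fin k, ((e (Sum.inl a) : Fin (k+l)) : ℕ) = (a : ℕ) := by
    intro a; rw [he]; simp
  have hcoer : ∀ b : Fin l, ((e (Sum.inr b) : Fin (k+l)) : ℕ) = k + (b : ℕ) := by
    intro b; rw [he]; simp
  have hblocks : ∀ (s t : Sum (Fin k) (Fin l)),
      Bmat k l x y (ρ (e s)) (e t) = Matrix.fromBlocks VdmX Cblk 0 Gmat s t := by
    rintro (a | a) (b | b)
    · -- top-left: Vandermonde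
      have hcol : ((e (Sum.inl b) : Fin (k+l)) : ℕ) = (b:ℕ) := hcoel b
      have hcollt : ((e (Sum.inl b) : Fin (k+l)) : ℕ) < k := by rw [hcol]; exact b.isLt
      have hxb : x ⟨((e (Sum.inl b) : Fin (k+l)) : ℕ), hcollt⟩ = x b := by
        have hfin : (⟨((e (Sum.inl b) : Fin (k+l)) : ℕ), hcollt⟩ : Fin k) = b := Fin.ext hcol
        rw [hfin]
      have halt := a.isLt
      simp only [Bmat, Matrix.of_apply, dif_pos hcollt, Matrix.fromBlocks_apply₁₁, hV]
      rcases Nat.lt_or_ge (a:ℕ) 1 with h0 | h1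
      · have h0' : (a:ℕ) = 0 := by omega
        have hr : ((ρ (e (Sum.inl a)) : Fin (k+l)) : ℕ) = 0 := by
          rw [hρ, rhoPerm_apply, hcoel, h0']
          split_ifs <;> omega
        rw [hr, if_pos rfl, h0']
        all_goals rw [pow_zero]
      rcases Nat.lt_or_ge (a:ℕ) 2 with h1' | h2
      · have h1'' : (a:ℕ) = 1 := by omega
        have hr : ((ρ (e (Sum.inl a)) : Fin (k+l)) : ℕ) = 1 := by
          rw [hρ, rhoPerm_apply, hcoel, h1'']
          split_ifs <;> omega
        rw [hr, if_neg (by omega), if_pos rfl, h1'']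
        all_goals rw [pow_one, hxb]
      · have hr : ((ρ (e (Sum.inl a)) : Fin (k+l)) : ℕ) = (a:ℕ) + 2 := by
          rw [hρ, rhoPerm_apply, hcoel]
          split_ifs <;> omega
        rw [hr, if_neg (by omega), if_neg (by omega),
          if_pos (by constructor <;> omega), hxb]
        all_goals (congr 1 <;> omega)
    · -- top-right: anything
      simp only [Matrix.fromBlocks_apply₁₂, hC, Matrix.of_apply]
    · -- bottom-left: zero
      have hcol : ((e (Sum.inl b) : Fin (k+l)) : ℕ) = (b:ℕ) := hcoel b
      have hcollt : ((e (Sum.inl b) : Fin (k+l)) : ℕ) < k := by rw [hcol]; exact b.isLt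
      have halt := a.isLt
      simp only [Bmat, Matrix.of_apply, dif_pos hcollt, Matrix.fromBlocks_apply₂₁,
        Matrix.zero_apply]
      rcases Nat.lt_or_ge (a:ℕ) 1 with h0 | h1
      · have h0' : (a:ℕ) = 0 := by omega
        have hr : ((ρ (e (Sum.inr a)) : Fin (k+l)) : ℕ) = 2 := by
          rw [hρ, rhoPerm_apply, hcoer, h0']
          split_ifs <;> omega
        rw [hr, if_neg (by omega), if_neg (by omega), if_neg (by omega)]
      rcases Nat.lt_or_ge (a:ℕ) 2 with h1' | h2
      · have h1'' : (a:ℕ) = 1 := by omega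
        have hr : ((ρ (e (Sum.inr a)) : Fin (k+l)) : ℕ) = 3 := by
          rw [hρ, rhoPerm_apply, hcoer, h1'']
          split_ifs <;> omega
        rw [hr, if_neg (by omega), if_neg (by omega), if_neg (by omega)]
      · have hr : ((ρ (e (Sum.inr a)) : Fin (k+l)) : ℕ) = k + (a:ℕ) := by
          rw [hρ, rhoPerm_apply, hcoer]
          split_ifs <;> omega
        rw [hr, if_neg (by omega), if_neg (by omega), if_neg (by omega)]
    · -- bottom-right: generalized Vandermonde
      have hcol : ((e (Sum.inr b) : Fin (k+l)) : ℕ) = k + (b:ℕ) := hcoer b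
      have hcolge : ¬ ((e (Sum.inr b) : Fin (k+l)) : ℕ) < k := by omega
      have hsub2 : ((e (Sum.inr b) : Fin (k+l)) : ℕ) - k = (b:ℕ) := by omega
      have hbl : ((b:ℕ)) < l := b.isLt
      have halt := a.isLt
      simp only [Bmat, Matrix.of_apply, dif_neg hcolge, Matrix.fromBlocks_apply₂₂, hG,
        psirow, hsub2]
      have hyb : (if h : (b:ℕ) < l then y ⟨(b:ℕ), h⟩ else 0) = y b := by
        rw [dif_pos hbl]
      rcases Nat.lt_or_ge (a:ℕ) 1 with h0 | h1
      · have h0' : (a:ℕ) = 0 := by omega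
        have hr : ((ρ (e (Sum.inr a)) : Fin (k+l)) : ℕ) = 2 := by
          rw [hρ, rhoPerm_apply, hcoer, h0']
          split_ifs <;> omega
        rw [hr, if_neg (by omega), hyb, h0']
        all_goals simp [muExp]
      rcases Nat.lt_or_ge (a:ℕ) 2 with h1' | h2
      · have h1'' : (a:ℕ) = 1 := by omega
        have hr : ((ρ (e (Sum.inr a)) : Fin (k+l)) : ℕ) = 3 := by
          rw [hρ, rhoPerm_apply, hcoer, h1'']
          split_ifs <;> omega
        rw [hr, if_neg (by omega), hyb, h1'']
        all_goals simp [muExp]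
      · have hr : ((ρ (e (Sum.inr a)) : Fin (k+l)) : ℕ) = k + (a:ℕ) := by
          rw [hρ, rhoPerm_apply, hcoer]
          split_ifs <;> omega
        rw [hr, if_neg (by omega), hyb]
        all_goals (congr 1 <;> (simp only [muExp]; split_ifs <;> omega))
  have hsub : (Bmat k l x y).submatrix ρ id
      = (Matrix.fromBlocks VdmX Cblk 0 Gmat).submatrix e.symm e.symm := by
    funext i j
    have h1 : i = e (e.symm i) := (e.apply_symm_apply i).symm
    have h2 : j = e (e.symm j) := (e.apply_symm_apply j).symm
    rw [Matrix.submatrix_apply, Matrix.submatrix_apply, id_eq]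
    conv_lhs => rw [h1, h2]
    exact hblocks (e.symm i) (e.symm j)
  have hdet1 : (Bmat k l x y).det = ((Bmat k l x y).submatrix ρ id).det := by
    rw [Matrix.det_permute, rhoPerm_sign]
    simp
  rw [hdet1, hsub, Matrix.det_submatrix_equiv_self, Matrix.det_fromBlocks_zero₂₁]
  have hVpos : 0 < VdmX.det := by
    have hVT : VdmX = (Matrix.vandermonde x)ᵀ := by
      funext i j
      simp [hV, Matrix.vandermonde]
    rw [hVT, Matrix.det_transpose, Matrix.det_vandermonde]
    exact Finset.prod_pos fun i _ => Finset.prod_pos fun j hj =>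
      sub_pos.2 (hx (Finset.mem_Ioi.1 hj))
  have hGpos : 0 < Gmat.det := by
    refine gvd_nat_pos l (fun i => muExp k (i:ℕ)) ?_ y hy0 hy
    intro a b hab
    rw [Fin.lt_def] at hab
    simp only [muExp]
    split_ifs <;> omega
  exact mul_pos hVpos hGpos

lemma Dmat_col_x (k l : ℕ) (hk : 2 ≤ k) (hl : 2 ≤ l) (x : Fin k → ℝ) (y : Fin l → ℝ)
    (τ : ℝ) (c : Fin (k+l)) (hc : (c:ℕ) < k) :
    (fun r => Dmat k l x y τ r c)
      = ∑ p ∈ Finset.range (k+l-2), (x ⟨(c:ℕ), hc⟩ * τ) ^ p • erow k l p := by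
  funext r
  rw [key_sum_erow k l (k+l-2) (fun p => (x ⟨(c:ℕ), hc⟩ * τ) ^ p) r]
  show Dmat k l x y τ r c = _
  simp only [Dmat, Matrix.of_apply]
  rw [dif_pos hc]
  have hr := r.isLt
  by_cases h0 : (r:ℕ) = 0
  · rw [if_pos h0, if_pos (by simp [prowF, h0]; omega)]
    simp [prowF, h0]
  by_cases h1 : (r:ℕ) = 1
  · rw [if_neg h0, if_pos h1, if_pos (by simp [prowF, h1]; omega)]
    simp [prowF, h1]
  by_cases h2 : (r:ℕ) = 2
  · rw [if_neg h0, if_neg h1, if_pos h2, if_neg (by simp [h2])]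
  by_cases h3 : (r:ℕ) = 3
  · rw [if_neg h0, if_neg h1, if_neg h2, if_pos h3, if_neg (by simp [h3])]
  · have hpr : prowF (r:ℕ) = (r:ℕ) - 2 := by
      simp only [prowF]; rw [if_neg (by omega)]
    rw [if_neg h0, if_neg h1, if_neg h2, if_neg h3,
      if_pos ⟨h2, h3, by rw [hpr]; omega⟩, hpr]

lemma Dmat_col_y (k l : ℕ) (x : Fin k → ℝ) (y : Fin l → ℝ)
    (τ : ℝ) (c : Fin (k+l)) (hc : ¬ (c:ℕ) < k) :
    (fun r => Dmat k l x y τ r c) = psirow k l y ((c:ℕ)-k) := by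
  funext r
  have hck : (c:ℕ) - k < l := by have := c.isLt; omega
  show Dmat k l x y τ r c = _
  simp only [Dmat, Matrix.of_apply, psirow]
  rw [dif_neg hc, dif_pos hck]
  by_cases h0 : (r:ℕ) = 0
  · rw [if_pos h0, if_pos (by omega)]
  by_cases h1 : (r:ℕ) = 1
  · rw [if_neg h0, if_pos h1, if_pos (by omega)]
  by_cases h2 : (r:ℕ) = 2
  · rw [if_neg h0, if_neg h1, if_pos h2, if_neg (by omega), h2]
    norm_num
  by_cases h3 : (r:ℕ) = 3
  · rw [if_neg h0, if_neg h1, if_neg h2, if_pos h3, if_neg (by omega), h3]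
    norm_num
  · rw [if_neg h0, if_neg h1, if_neg h2, if_neg h3, if_neg (by omega)]

lemma Bmat_col_x (k l : ℕ) (hk : 2 ≤ k) (hl : 2 ≤ l) (x : Fin k → ℝ) (y : Fin l → ℝ)
    (c : Fin (k+l)) (hc : (c:ℕ) < k) :
    (fun r => Bmat k l x y r c)
      = ∑ p ∈ Finset.range (k+l-2),
          (if p < k then x ⟨(c:ℕ), hc⟩ ^ p else 0) • erow k l p := by
  funext r
  rw [key_sum_erow k l (k+l-2) (fun p => if p < k then x ⟨(c:ℕ), hc⟩ ^ p else 0) r]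
  show Bmat k l x y r c = _
  simp only [Bmat, Matrix.of_apply]
  rw [dif_pos hc]
  have hr := r.isLt
  by_cases h0 : (r:ℕ) = 0
  · have hpr : prowF (r:ℕ) = 0 := by simp [prowF, h0]
    rw [if_pos h0, if_pos ⟨by omega, by omega, by rw [hpr]; omega⟩, hpr,
      if_pos (by omega), pow_zero]
  by_cases h1 : (r:ℕ) = 1
  · have hpr : prowF (r:ℕ) = 1 := by simp [prowF, h1]
    rw [if_neg h0, if_pos h1, if_pos ⟨by omega, by omega, by rw [hpr]; omega⟩, hpr,
      if_pos (by omega), pow_one]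
  by_cases h2 : (r:ℕ) = 2
  · rw [if_neg h0, if_neg h1, if_neg (by omega), if_neg (by simp [h2])]
  by_cases h3 : (r:ℕ) = 3
  · rw [if_neg h0, if_neg h1, if_neg (by omega), if_neg (by simp [h3])]
  -- r ≥ 4
  · have hpr : prowF (r:ℕ) = (r:ℕ) - 2 := by
      simp only [prowF]; rw [if_neg (by omega)]
    by_cases h4 : (r:ℕ) ≤ k+1
    · rw [if_neg h0, if_neg h1, if_pos ⟨by omega, h4⟩,
        if_pos ⟨h2, h3, by rw [hpr]; omega⟩, hpr, if_pos (by omega)]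
    · rw [if_neg h0, if_neg h1, if_neg (by omega),
        if_pos ⟨h2, h3, by rw [hpr]; omega⟩, hpr, if_neg (by omega)]

lemma Bmat_col_y (k l : ℕ) (x : Fin k → ℝ) (y : Fin l → ℝ)
    (c : Fin (k+l)) (hc : ¬ (c:ℕ) < k) :
    (fun r => Bmat k l x y r c) = psirow k l y ((c:ℕ)-k) := by
  funext r
  show Bmat k l x y r c = _
  simp only [Bmat, Matrix.of_apply]
  rw [dif_neg hc]

end Statement16Aux

/-- for `k, ℓ ≥ 2` with `k + ℓ` odd and increasing positive `x_i`, `y_j`,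
the determinant `D_{k,ℓ}(τ)` is strictly positive for all sufficiently small `τ > 0`. -/
theorem statement_16 (k l : ℕ) (hk : 2 ≤ k) (hl : 2 ≤ l) (hodd : Odd (k + l))
    (x : Fin k → ℝ) (y : Fin l → ℝ)
    (hx0 : ∀ i, 0 < x i) (hx : StrictMono x)
    (hy0 : ∀ j, 0 < y j) (hy : StrictMono y) :
    ∃ τ0 : ℝ, 0 < τ0 ∧ ∀ τ : ℝ, 0 < τ → τ < τ0 → 0 < (Dmat k l x y τ).det := by
  classical
  set m := ∑ i ∈ Finset.range k, i with hm
  set S := Fintype.piFinset (Aset k l) with hS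
  set dE : (Fin (k+l) → ℕ) → ℝ := fun v => (Emat k l y v).det with hdE
  set w : (Fin (k+l) → ℕ) → Fin k → ℕ := fun v i => v (Fin.castAdd l i) with hw
  set Px : (Fin (k+l) → ℕ) → ℝ := fun v => ∏ i : Fin k, x i ^ (w v i) with hPx
  set PxT : (Fin (k+l) → ℕ) → ℝ :=
    fun v => ∏ i : Fin k, (if w v i < k then x i ^ (w v i) else 0) with hPxT
  set W : (Fin (k+l) → ℕ) → ℕ := fun v => ∑ i : Fin k, w v i with hW
  have hcastlt : ∀ i : Fin k, ((Fin.castAdd l i : Fin (k+l)) : ℕ) < k := by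
    intro i; simp [Fin.coe_castAdd]
  have hxcast : ∀ (i : Fin k) (h : ((Fin.castAdd l i : Fin (k+l)) : ℕ) < k),
      x ⟨((Fin.castAdd l i : Fin (k+l)) : ℕ), h⟩ = x i := by
    intro i h
    have heq : (⟨((Fin.castAdd l i : Fin (k+l)) : ℕ), h⟩ : Fin k) = i :=
      Fin.ext (by simp [Fin.coe_castAdd])
    rw [heq]
  have hnatge : ∀ j : Fin l, ¬ ((Fin.natAdd k j : Fin (k+l)) : ℕ) < k := by
    intro j; simp [Fin.coe_natAdd]
  -- expansion of Dmat
  have hDexp : ∀ τ : ℝ, (Dmat k l x y τ).det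
      = ∑ v ∈ S, (τ ^ W v * Px v) * dE v := by
    intro τ
    have h1 := det_expand k l y
      (fun c p => if h : (c:ℕ) < k then (x ⟨(c:ℕ), h⟩ * τ) ^ p else 0)
      (Dmat k l x y τ)
      (fun c hc => by
        rw [Dmat_col_x k l hk hl x y τ c hc]
        exact Finset.sum_congr rfl fun p _ => by rw [dif_pos hc])
      (fun c hc => Dmat_col_y k l x y τ c (not_lt.2 hc))
    rw [h1]
    refine Finset.sum_congr rfl fun v hv => ?_
    congr 1
    rw [Fin.prod_univ_add (f := fun c : Fin (k+l) =>
      if (c:ℕ) < k then (if h : (c:ℕ) < k then (x ⟨(c:ℕ), h⟩ * τ) ^ (v c) else 0) else 1)]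
    have h2 : ∀ j : Fin l, (if ((Fin.natAdd k j : Fin (k+l)) : ℕ) < k
        then (if h : ((Fin.natAdd k j : Fin (k+l)) : ℕ) < k
          then (x ⟨((Fin.natAdd k j : Fin (k+l)) : ℕ), h⟩ * τ) ^ (v (Fin.natAdd k j)) else 0)
        else 1) = 1 := fun j => if_neg (hnatge j)
    rw [Finset.prod_congr rfl (fun j _ => h2 j), Finset.prod_const_one, mul_one]
    have h3 : ∀ i : Fin k, (if ((Fin.castAdd l i : Fin (k+l)) : ℕ) < k
        then (if h : ((Fin.castAdd l i : Fin (k+l)) : ℕ) < k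
          then (x ⟨((Fin.castAdd l i : Fin (k+l)) : ℕ), h⟩ * τ) ^ (v (Fin.castAdd l i)) else 0)
        else 1) = (x i * τ) ^ (w v i) := by
      intro i
      rw [if_pos (hcastlt i), dif_pos (hcastlt i), hxcast i (hcastlt i)]
    rw [Finset.prod_congr rfl (fun i _ => h3 i)]
    have h4 : ∀ i : Fin k, (x i * τ) ^ (w v i) = x i ^ (w v i) * τ ^ (w v i) :=
      fun i => mul_pow _ _ _
    rw [Finset.prod_congr rfl (fun i _ => h4 i), Finset.prod_mul_distrib,
      Finset.prod_pow_eq_pow_sum]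
    ring
  -- expansion of Bmat
  have hBexp : (Bmat k l x y).det = ∑ v ∈ S, PxT v * dE v := by
    have h1 := det_expand k l y
      (fun c p => if h : (c:ℕ) < k then (if p < k then x ⟨(c:ℕ), h⟩ ^ p else 0) else 0)
      (Bmat k l x y)
      (fun c hc => by
        rw [Bmat_col_x k l hk hl x y c hc]
        exact Finset.sum_congr rfl fun p _ => by rw [dif_pos hc])
      (fun c hc => Bmat_col_y k l x y c (not_lt.2 hc))
    rw [h1]
    refine Finset.sum_congr rfl fun v hv => ?_
    congr 1
    rw [Fin.prod_univ_add (f := fun c : Fin (k+l) =>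
      if (c:ℕ) < k then (if h : (c:ℕ) < k
        then (if v c < k then x ⟨(c:ℕ), h⟩ ^ (v c) else 0) else 0) else 1)]
    have h2 : ∀ j : Fin l, (if ((Fin.natAdd k j : Fin (k+l)) : ℕ) < k
        then (if h : ((Fin.natAdd k j : Fin (k+l)) : ℕ) < k
          then (if v (Fin.natAdd k j) < k
            then x ⟨((Fin.natAdd k j : Fin (k+l)) : ℕ), h⟩ ^ (v (Fin.natAdd k j)) else 0)
          else 0)
        else 1) = 1 := fun j => if_neg (hnatge j)
    rw [Finset.prod_congr rfl (fun j _ => h2 j), Finset.prod_const_one, mul_one]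
    have h3 : ∀ i : Fin k, (if ((Fin.castAdd l i : Fin (k+l)) : ℕ) < k
        then (if h : ((Fin.castAdd l i : Fin (k+l)) : ℕ) < k
          then (if v (Fin.castAdd l i) < k
            then x ⟨((Fin.castAdd l i : Fin (k+l)) : ℕ), h⟩ ^ (v (Fin.castAdd l i)) else 0)
          else 0)
        else 1) = (if w v i < k then x i ^ (w v i) else 0) := by
      intro i
      rw [if_pos (hcastlt i), dif_pos (hcastlt i), hxcast i (hcastlt i)]
    rw [Finset.prod_congr rfl (fun i _ => h3 i)]
  -- injectivity from nonvanishing of dE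
  have hinj : ∀ v : Fin (k+l) → ℕ, dE v ≠ 0 → Function.Injective (w v) := by
    intro v hv a b hab
    by_contra hne
    refine hv (Emat_det_zero k l y v (Fin.castAdd l a) (Fin.castAdd l b) ?_
      (hcastlt a) (hcastlt b) hab)
    intro hEq
    exact hne (by
      have := congrArg Fin.val hEq
      simp only [Fin.coe_castAdd] at this
      exact Fin.ext this)
  -- bound constant
  set C := ∑ v ∈ S, |Px v * dE v| with hC
  have hC0 : 0 ≤ C := Finset.sum_nonneg fun v _ => abs_nonneg _
  set Bdet := (Bmat k l x y).det with hBdet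
  have hBpos : 0 < Bdet := Bmat_det_pos k l hk hl x y hx0 hx hy0 hy
  -- main estimate
  have hbound : ∀ τ : ℝ, 0 < τ → τ ≤ 1 →
      |(Dmat k l x y τ).det - τ ^ m * Bdet| ≤ τ ^ (m+1) * C := by
    intro τ hτ hτ1
    rw [hDexp τ, hBexp, Finset.mul_sum, ← Finset.sum_sub_distrib]
    refine (Finset.abs_sum_le_sum_abs _ _).trans ?_
    rw [hC, Finset.mul_sum]
    refine Finset.sum_le_sum fun v hv => ?_
    by_cases hdv : dE v = 0
    · rw [hdv]
      simp only [mul_zero, zero_sub, sub_zero, neg_zero, abs_zero]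
      positivity
    · have hwinj := hinj v hdv
      by_cases hall : ∀ i, w v i < k
      · have hWm : W v = m := by rw [hW, hm]; exact inj_sum_eq k (w v) hwinj hall
        have hPT : PxT v = Px v := by
          rw [hPxT, hPx]
          exact Finset.prod_congr rfl fun i _ => if_pos (hall i)
        rw [hWm, hPT]
        have : τ ^ m * Px v * dE v - τ ^ m * (Px v * dE v) = 0 := by ring
        rw [this, abs_zero]
        positivity
      · have hWm : m + 1 ≤ W v :=
          Nat.succ_le_of_lt ((inj_sum_lower k (w v) hwinj).2 hall)
        have hPT : PxT v = 0 := by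
          push_neg at hall
          obtain ⟨i0, hi0⟩ := hall
          exact Finset.prod_eq_zero (Finset.mem_univ i0) (if_neg (not_lt.2 hi0))
        rw [hPT, zero_mul, mul_zero, sub_zero, abs_mul, abs_mul, abs_pow,
          abs_of_pos hτ]
        have hle : τ ^ (W v) ≤ τ ^ (m+1) :=
          pow_le_pow_of_le_one (le_of_lt hτ) hτ1 hWm
        calc τ ^ W v * |Px v| * |dE v| ≤ τ ^ (m+1) * |Px v| * |dE v| := by
              exact mul_le_mul_of_nonneg_right
                (mul_le_mul_of_nonneg_right hle (abs_nonneg _)) (abs_nonneg _)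
          _ = τ ^ (m+1) * |Px v * dE v| := by rw [abs_mul]; ring
  -- conclusion
  refine ⟨min 1 (Bdet / (C+1)), lt_min one_pos (div_pos hBpos (by linarith)), ?_⟩
  intro τ hτ hτ0
  have hτ1 : τ ≤ 1 := le_of_lt (lt_of_lt_of_le hτ0 (min_le_left _ _))
  have hτB : τ * (C+1) < Bdet := by
    have h1 : τ < Bdet / (C+1) := lt_of_lt_of_le hτ0 (min_le_right _ _)
    exact (lt_div_iff₀ (by linarith)).1 h1
  have hb := hbound τ hτ hτ1
  have h1 : τ ^ m * Bdet - τ ^ (m+1) * C ≤ (Dmat k l x y τ).det := by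
    have := (abs_le.1 hb).1
    linarith
  have hpm : 0 < τ ^ m := pow_pos hτ m
  have h2 : τ ^ (m+1) * C = τ ^ m * (τ * C) := by rw [pow_succ]; ring
  have h3 : τ * C < Bdet := by nlinarith
  nlinarith [mul_pos hpm (sub_pos.2 h3)]
end
end
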